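/- arXiv:1802.04137 — 3 statements merged into one kernel-verified Lean document; each statement's English description precedes it below -/
import Mathlib

section
/- For any two Borel sets A, A' ⊆ ℝ, the Hausdorff dimension of the product set A × A' is at most the Hausdorff dimension of A plus the packing dimension of A'. -/
open Filter MeasureTheory Set
open scoped ENNReal

/-- Minimal number of closed balls of radius `r` needed to cover `A`. -/
noncomputable def covN (A : Set ℝ) (r : ℝ) : ℕ∞ :=
  ⨅ (t : Finset ℝ) (_ : A ⊆ ⋃ x ∈ t, Metric.closedBall x r), (t.card : ℕ∞)

/-- Upper box dimension, computed along scales `2⁻¹ ^ N`. -/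
noncomputable def ubox (A : Set ℝ) : ℝ≥0∞ :=
  Filter.limsup (fun N : ℕ =>
    if covN A ((2 : ℝ)⁻¹ ^ N) = ⊤ then (⊤ : ℝ≥0∞)
    else ENNReal.ofReal (Real.logb 2 ((covN A ((2 : ℝ)⁻¹ ^ N)).toNat) / N)) Filter.atTop

/-- Packing dimension via countable covers and upper box dimension. -/
noncomputable def packDim (A : Set ℝ) : ℝ≥0∞ :=
  ⨅ (f : ℕ → Set ℝ) (_ : A ⊆ ⋃ n, f n), ⨆ n, ubox (f n)

lemma diam_prod_le (s t : Set ℝ) :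
    EMetric.diam (s ×ˢ t) ≤ max (EMetric.diam s) (EMetric.diam t) := by
  apply EMetric.diam_le
  rintro ⟨a, b⟩ ⟨ha, hb⟩ ⟨a', b'⟩ ⟨ha', hb'⟩
  rw [Prod.edist_eq]
  exact max_le_max (EMetric.edist_le_diam_of_mem ha ha') (EMetric.edist_le_diam_of_mem hb hb')

lemma exists_ballCover (B : Set ℝ) (hB : B.Nonempty) (τ : ℝ)
    (hub : ubox B < ENNReal.ofReal τ) :
    ∃ N₁ : ℕ, ∀ N ≥ N₁, ∃ F : Finset ℝ,
      (B ⊆ ⋃ x ∈ F, Metric.closedBall x ((2:ℝ)⁻¹ ^ N)) ∧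
      (F.card : ℝ≥0∞) ≤ (2:ℝ≥0∞) ^ (τ * N) := by
  have hτ : 0 < τ := ENNReal.ofReal_pos.mp (lt_of_le_of_lt (zero_le) hub)
  have hev := Filter.eventually_lt_of_limsup_lt hub
  rw [Filter.eventually_atTop] at hev
  obtain ⟨N₀, hN₀⟩ := hev
  refine ⟨max N₀ 1, fun N hN => ?_⟩
  have hN1 : 1 ≤ N := le_trans (le_max_right _ _) hN
  have hNev := hN₀ N (le_trans (le_max_left _ _) hN)
  set c := covN B ((2:ℝ)⁻¹ ^ N) with hc
  have hc_ne : c ≠ ⊤ := by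
    intro h
    rw [if_pos h] at hNev
    exact (not_top_lt hNev)
  rw [if_neg hc_ne] at hNev
  -- extract a cover with card ≤ c.toNat
  have h2 : covN B ((2:ℝ)⁻¹ ^ N) < ((c.toNat + 1 : ℕ) : ℕ∞) := by
    rw [← hc]
    conv_lhs => rw [← ENat.coe_toNat hc_ne]
    exact_mod_cast Nat.lt_succ_self _
  rw [covN, iInf_lt_iff] at h2
  obtain ⟨F, h2⟩ := h2
  rw [iInf_lt_iff] at h2
  obtain ⟨hFcov, hcard⟩ := h2
  have hcard' : F.card ≤ c.toNat := by exact_mod_cast Nat.lt_succ_iff.mp (by exact_mod_cast hcard)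
  -- F is nonempty
  have hm1 : 1 ≤ c.toNat := by
    obtain ⟨b, hb⟩ := hB
    have := hFcov hb
    simp only [Set.mem_iUnion] at this
    obtain ⟨x, hx, -⟩ := this
    exact le_trans (Finset.card_pos.mpr ⟨x, hx⟩) hcard'
  have hlog : Real.logb 2 (c.toNat) / N < τ := by
    have h0 : 0 ≤ Real.logb 2 (c.toNat) / N :=
      div_nonneg (Real.logb_nonneg one_lt_two (by exact_mod_cast hm1)) (Nat.cast_nonneg N)
    exact (ENNReal.ofReal_lt_ofReal_iff hτ).mp hNev
  have hNpos : (0:ℝ) < N := by exact_mod_cast hN1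
  have hlt : Real.logb 2 (c.toNat) < τ * N := by
    rw [div_lt_iff₀ hNpos] at hlog; linarith
  have hmain : (c.toNat : ℝ) ≤ 2 ^ (τ * N) := by
    calc (c.toNat : ℝ) = 2 ^ (Real.logb 2 (c.toNat)) :=
          (Real.rpow_logb two_pos (by norm_num) (by exact_mod_cast hm1)).symm
      _ ≤ 2 ^ (τ * N) := Real.rpow_le_rpow_of_exponent_le one_le_two hlt.le
  refine ⟨F, hFcov, ?_⟩
  calc (F.card : ℝ≥0∞) ≤ (c.toNat : ℝ≥0∞) := by exact_mod_cast hcard'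
    _ = ENNReal.ofReal (c.toNat : ℝ) := by simp [ENNReal.ofReal_natCast]
    _ ≤ ENNReal.ofReal (2 ^ (τ * N)) := ENNReal.ofReal_le_ofReal hmain
    _ = (2:ℝ≥0∞) ^ (τ * N) := by
        rw [← ENNReal.ofReal_rpow_of_pos two_pos]
        norm_num

lemma exists_cover (A : Set ℝ) (s : ℝ) (hs : 0 < s) (h : μH[s] A = 0)
    {δ ε₀ : ℝ≥0∞} (hδ : 0 < δ) (hε₀ : 0 < ε₀) :
    ∃ U : ℕ → Set ℝ, (A ⊆ ⋃ n, U n) ∧ (∀ n, EMetric.diam (U n) ≤ δ) ∧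
      ∑' n, EMetric.diam (U n) ^ s ≤ ε₀ := by
  have h1 : (⨅ (t : ℕ → Set ℝ) (_ : A ⊆ ⋃ n, t n) (_ : ∀ n, EMetric.diam (t n) ≤ δ),
      ∑' n, ⨆ _ : (t n).Nonempty, EMetric.diam (t n) ^ s) ≤ μH[s] A := by
    rw [MeasureTheory.Measure.hausdorffMeasure_apply]
    exact le_iSup₂_of_le δ hδ le_rfl
  rw [h] at h1
  have h2 := lt_of_le_of_lt h1 hε₀
  rw [iInf_lt_iff] at h2
  obtain ⟨U, h2⟩ := h2
  rw [iInf_lt_iff] at h2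
  obtain ⟨hcov, h2⟩ := h2
  rw [iInf_lt_iff] at h2
  obtain ⟨hdiam, hsum⟩ := h2
  refine ⟨U, hcov, hdiam, ?_⟩
  have heq : ∀ n, EMetric.diam (U n) ^ s
      = ⨆ _ : (U n).Nonempty, EMetric.diam (U n) ^ s := by
    intro n
    by_cases hne : (U n).Nonempty
    · rw [iSup_pos hne]
    · rw [Set.not_nonempty_iff_eq_empty] at hne
      simp [hne, EMetric.diam, ENNReal.zero_rpow_of_pos hs]
  calc ∑' n, EMetric.diam (U n) ^ s
      = ∑' n, ⨆ _ : (U n).Nonempty, EMetric.diam (U n) ^ s := tsum_congr heq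
    _ ≤ ε₀ := hsum.le

lemma pow2inv_le_iff {a b : ℕ} : ((2:ℝ≥0∞)⁻¹) ^ a ≤ 2⁻¹ ^ b ↔ b ≤ a := by
  rw [← ENNReal.inv_pow, ← ENNReal.inv_pow, ENNReal.inv_le_inv]
  have ha : (2:ℝ≥0∞) ^ a = ((2 ^ a : ℕ) : ℝ≥0∞) := by push_cast; ring
  have hb : (2:ℝ≥0∞) ^ b = ((2 ^ b : ℕ) : ℝ≥0∞) := by push_cast; ring
  rw [ha, hb, Nat.cast_le, Nat.pow_le_pow_iff_right (le_refl 2)]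

lemma harith {s τ : ℝ} (n : ℕ) :
    (2:ℝ≥0∞) ^ (τ * n) * (2 * ((2:ℝ≥0∞)⁻¹) ^ n) ^ (s + τ)
      = (2:ℝ≥0∞) ^ (s + τ) * (((2:ℝ≥0∞)⁻¹) ^ n) ^ s := by
  have h2 : (2:ℝ≥0∞) ≠ 0 := two_ne_zero
  have h2' : (2:ℝ≥0∞) ≠ ⊤ := by norm_num
  have hx1 : ((2:ℝ≥0∞)⁻¹) ^ n = (2:ℝ≥0∞) ^ (-(n:ℝ)) := by
    rw [← ENNReal.inv_pow, ← ENNReal.rpow_natCast (2:ℝ≥0∞) n, ← ENNReal.rpow_neg]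
  have hmul : (2:ℝ≥0∞) * (2:ℝ≥0∞) ^ (-(n:ℝ)) = 2 ^ (1 + -(n:ℝ)) := by
    rw [ENNReal.rpow_add _ _ h2 h2', ENNReal.rpow_one]
  rw [hx1, hmul, ← ENNReal.rpow_mul, ← ENNReal.rpow_mul,
    ← ENNReal.rpow_add _ _ h2 h2', ← ENNReal.rpow_add _ _ h2 h2']
  congr 1
  ring

lemma key (A B : Set ℝ) (hB : B.Nonempty) (s τ : ℝ) (hs : 0 < s)
    (hdA : μH[s] A = 0) (hub : ubox B < ENNReal.ofReal τ) :
    μH[s + τ] (A ×ˢ B) = 0 := by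
  classical
  have hτ : 0 < τ := ENNReal.ofReal_pos.mp (lt_of_le_of_lt (zero_le) hub)
  set d : ℝ := s + τ with hd
  have hd0 : 0 < d := by positivity
  obtain ⟨N₁, hN₁⟩ := exists_ballCover B hB τ hub
  -- constants
  set P : ℝ≥0∞ := (2:ℝ≥0∞) ^ d with hP
  have hPpos : 0 < P := ENNReal.rpow_pos (by norm_num) (by norm_num)
  have hPtop : P ≠ ⊤ := ENNReal.rpow_ne_top_of_nonneg hd0.le (by norm_num)
  set q : ℝ≥0∞ := ((2:ℝ≥0∞)⁻¹) ^ s with hq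
  have hq1 : q < 1 := ENNReal.rpow_lt_one (by simp [ENNReal.inv_lt_one]) hs
  set K : ℝ≥0∞ := (1 - q)⁻¹ with hK
  have hKtop : K ≠ ⊤ := by
    rw [hK, Ne, ENNReal.inv_eq_top, tsub_eq_zero_iff_le, not_le]
    exact hq1
  rw [← nonpos_iff_eq_zero, Measure.hausdorffMeasure_apply]
  refine iSup₂_le fun r hr => ?_
  refine ENNReal.le_of_forall_pos_le_add fun η hη _ => ?_
  rw [zero_add]
  have hη2 : (0:ℝ≥0∞) < (η:ℝ≥0∞) / 2 :=
    ENNReal.div_pos (by exact_mod_cast hη.ne') (by norm_num)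
  set ε₀ : ℝ≥0∞ := ((η:ℝ≥0∞) / 2) / P with hε₀def
  have hε₀pos : 0 < ε₀ := ENNReal.div_pos hη2.ne' hPtop
  -- choose M
  have htend : Filter.Tendsto (fun M : ℕ => ((2:ℝ≥0∞)⁻¹) ^ M) atTop (nhds 0) :=
    ENNReal.tendsto_pow_atTop_nhds_zero_of_lt_one (by simp [ENNReal.inv_lt_one])
  have htendq : Filter.Tendsto (fun M : ℕ => P * K * q * q ^ M) atTop (nhds 0) := by
    have := ENNReal.Tendsto.const_mul
      (ENNReal.tendsto_pow_atTop_nhds_zero_of_lt_one hq1) (a := P * K * q)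
      (Or.inr (by finiteness))
    simpa using this
  have hev1 : ∀ᶠ M : ℕ in atTop, ((2:ℝ≥0∞)⁻¹) ^ M < r / 2 :=
    htend.eventually_lt_const (ENNReal.div_pos hr.ne' (by norm_num))
  have hev2 : ∀ᶠ M : ℕ in atTop, P * K * q * q ^ M < (η:ℝ≥0∞) / 2 :=
    htendq.eventually_lt_const hη2
  obtain ⟨M, hMr, hMtail, hMN₁, hM1⟩ :=
    (hev1.and (hev2.and ((eventually_ge_atTop N₁).and (eventually_ge_atTop 1)))).exists
  -- cover of A
  have hδpos : (0:ℝ≥0∞) < ((2:ℝ≥0∞)⁻¹) ^ M := ENNReal.pow_pos (by simp) M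
  obtain ⟨U, hUcov, hUdiam, hUsum⟩ := exists_cover A s hs hdA hδpos hε₀pos
  -- scale selection
  set NN : ℕ → ℕ := fun i =>
    if h : ∃ N : ℕ, ((2:ℝ≥0∞)⁻¹) ^ N ≤ EMetric.diam (U i) then Nat.find h else M + 1 + i
    with hNN
  have hP1 : ∀ i, ((2:ℝ≥0∞)⁻¹) ^ (NN i)
      ≤ max (EMetric.diam (U i)) (((2:ℝ≥0∞)⁻¹) ^ (M + 1 + i)) := by
    intro i
    simp only [hNN]
    split_ifs with h
    · exact le_max_of_le_left (Nat.find_spec h)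
    · exact le_max_of_le_right le_rfl
  have hP2 : ∀ i, EMetric.diam (U i) ≤ 2 * ((2:ℝ≥0∞)⁻¹) ^ (NN i) := by
    intro i
    simp only [hNN]
    split_ifs with h
    · set N := Nat.find h with hNdef
      have hfind : ((2:ℝ≥0∞)⁻¹) ^ N ≤ EMetric.diam (U i) := Nat.find_spec h
      have hN1 : 1 ≤ N := by
        by_contra h0
        push_neg at h0
        interval_cases N
        · have h1 : EMetric.diam (U i) ≤ ((2:ℝ≥0∞)⁻¹) ^ M := hUdiam i
          have h2 : ((2:ℝ≥0∞)⁻¹) ^ M ≤ 2⁻¹ := by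
            simpa using pow2inv_le_iff.mpr hM1
          simp only [pow_zero] at hfind
          have hcontr : (1:ℝ≥0∞) ≤ 2⁻¹ := le_trans hfind (le_trans h1 h2)
          exact absurd hcontr (not_le.mpr (by simp [ENNReal.inv_lt_one]))
      have hmin : ¬ ((2:ℝ≥0∞)⁻¹) ^ (N - 1) ≤ EMetric.diam (U i) :=
        Nat.find_min h (by omega)
      push_neg at hmin
      have heq : ((2:ℝ≥0∞)⁻¹) ^ (N - 1) = 2 * ((2:ℝ≥0∞)⁻¹) ^ N := by
        have hN' : N = (N - 1) + 1 := by omega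
        conv_rhs => rw [hN']
        rw [pow_succ, mul_comm (2:ℝ≥0∞), mul_assoc,
          ENNReal.inv_mul_cancel two_ne_zero (by norm_num), mul_one]
      exact le_of_lt (heq ▸ hmin)
    · have hzero : EMetric.diam (U i) = 0 := by
        by_contra hne
        obtain ⟨n, hn⟩ := ENNReal.exists_inv_two_pow_lt hne
        exact h ⟨n, hn.le⟩
      simp [hzero]
  -- scales are at least M
  have hP3 : ∀ i, M ≤ NN i := by
    intro i
    simp only [hNN]
    split_ifs with h
    · exact pow2inv_le_iff.mp ((Nat.find_spec h).trans (hUdiam i))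
    · omega
  -- ball covers of B at each scale
  have hFall : ∀ i : ℕ, ∃ F : Finset ℝ,
      (B ⊆ ⋃ x ∈ F, Metric.closedBall x ((2:ℝ)⁻¹ ^ (NN i))) ∧
      (F.card : ℝ≥0∞) ≤ (2:ℝ≥0∞) ^ (τ * (NN i)) :=
    fun i => hN₁ (NN i) (le_trans hMN₁ (hP3 i))
  choose F hFcov hFcard using hFall
  -- the product cover
  set V : ℕ → ℕ → Set ℝ := fun i j =>
    if h : j < (F i).toList.length
    then Metric.closedBall ((F i).toList.get ⟨j, h⟩) ((2:ℝ)⁻¹ ^ (NN i)) else ∅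
    with hV
  set e : ℕ ≃ ℕ × ℕ := (Denumerable.eqv (ℕ × ℕ)).symm with he
  set t : ℕ → Set (ℝ × ℝ) := fun n => U (e n).1 ×ˢ V (e n).1 (e n).2 with ht
  have hofReal : ∀ n : ℕ, ENNReal.ofReal ((2:ℝ)⁻¹ ^ n) = ((2:ℝ≥0∞)⁻¹) ^ n := by
    intro n
    rw [ENNReal.ofReal_pow (by norm_num)]
    congr 1
    rw [ENNReal.ofReal_inv_of_pos (by norm_num)]
    norm_num
  have hVdiam : ∀ i j, EMetric.diam (V i j) ≤ 2 * ((2:ℝ≥0∞)⁻¹) ^ (NN i) := by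
    intro i j
    simp only [hV]
    split_ifs with h
    · have h0 : (0:ℝ) ≤ (2:ℝ)⁻¹ ^ (NN i) := by positivity
      rw [← Metric.emetric_closedBall h0]
      exact le_trans EMetric.diam_closedBall (by rw [hofReal])
    · simp [EMetric.diam]
  -- coverage
  have hcov : A ×ˢ B ⊆ ⋃ n, t n := by
    rintro ⟨a, b⟩ ⟨ha, hb⟩
    have ha' := hUcov ha
    rw [Set.mem_iUnion] at ha'
    obtain ⟨i, hai⟩ := ha'
    have hb' := hFcov i hb
    simp only [Set.mem_iUnion] at hb'
    obtain ⟨x, hxF, hbx⟩ := hb'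
    have hxl : x ∈ (F i).toList := by rwa [Finset.mem_toList]
    obtain ⟨⟨j, hj⟩, rfl⟩ := List.mem_iff_get.mp hxl
    rw [Set.mem_iUnion]
    refine ⟨e.symm (i, j), ?_⟩
    have heq : e (e.symm (i, j)) = (i, j) := e.apply_symm_apply _
    simp only [ht, heq]
    refine Set.mk_mem_prod hai ?_
    simp only [hV]
    rw [dif_pos hj]
    exact hbx
  -- diameter bound
  have hdiam : ∀ n, EMetric.diam (t n) ≤ r := by
    intro n
    refine le_trans (diam_prod_le _ _) ?_
    have h1 : EMetric.diam (U (e n).1) ≤ 2 * ((2:ℝ≥0∞)⁻¹) ^ M :=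
      le_trans (hUdiam _) (le_mul_of_one_le_left (zero_le) one_le_two)
    have h2 : EMetric.diam (V (e n).1 (e n).2) ≤ 2 * ((2:ℝ≥0∞)⁻¹) ^ M :=
      le_trans (hVdiam _ _) (mul_le_mul_right (pow2inv_le_iff.mpr (hP3 _)) 2)
    have h3 : 2 * ((2:ℝ≥0∞)⁻¹) ^ M ≤ r := by
      calc 2 * ((2:ℝ≥0∞)⁻¹) ^ M ≤ 2 * (r / 2) := mul_le_mul_right hMr.le 2
        _ ≤ r := ENNReal.mul_div_le
    exact max_le (h1.trans h3) (h2.trans h3)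
  -- the sum bound
  have hinner : ∀ i, (∑' j : ℕ, EMetric.diam (U i ×ˢ V i j) ^ d)
      ≤ P * (((2:ℝ≥0∞)⁻¹) ^ (NN i)) ^ s := by
    intro i
    have hzero : ∀ j ∉ Finset.range (F i).toList.length,
        EMetric.diam (U i ×ˢ V i j) ^ d = 0 := by
      intro j hj
      rw [Finset.mem_range] at hj
      simp only [hV]
      rw [dif_neg hj]
      simp [EMetric.diam, ENNReal.zero_rpow_of_pos hd0]
    rw [tsum_eq_sum hzero]
    have hbound : ∀ j ∈ Finset.range (F i).toList.length,
        EMetric.diam (U i ×ˢ V i j) ^ d ≤ (2 * ((2:ℝ≥0∞)⁻¹) ^ (NN i)) ^ d := by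
      intro j _
      refine ENNReal.rpow_le_rpow ?_ hd0.le
      exact le_trans (diam_prod_le _ _) (max_le (hP2 i) (hVdiam i j))
    calc ∑ j ∈ Finset.range (F i).toList.length, EMetric.diam (U i ×ˢ V i j) ^ d
        ≤ (Finset.range (F i).toList.length).card • (2 * ((2:ℝ≥0∞)⁻¹) ^ (NN i)) ^ d :=
          Finset.sum_le_card_nsmul _ _ _ hbound
      _ = ((F i).card : ℝ≥0∞) * (2 * ((2:ℝ≥0∞)⁻¹) ^ (NN i)) ^ d := by
          rw [Finset.card_range, Finset.length_toList, nsmul_eq_mul]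
      _ ≤ (2:ℝ≥0∞) ^ (τ * (NN i)) * (2 * ((2:ℝ≥0∞)⁻¹) ^ (NN i)) ^ d :=
          mul_le_mul_left (hFcard i) _
      _ = P * (((2:ℝ≥0∞)⁻¹) ^ (NN i)) ^ s := harith (NN i)
  have hqq : ∀ n : ℕ, (((2:ℝ≥0∞)⁻¹) ^ n) ^ s = q ^ n := by
    intro n
    rw [← ENNReal.rpow_natCast ((2:ℝ≥0∞)⁻¹) n, ← ENNReal.rpow_mul, mul_comm,
      ENNReal.rpow_mul, ENNReal.rpow_natCast]
  have hmaxsplit : ∀ u v : ℝ≥0∞, (max u v) ^ s ≤ u ^ s + v ^ s := by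
    intro u v
    rcases max_cases u v with ⟨h, -⟩ | ⟨h, -⟩ <;> rw [h]
    · exact le_self_add
    · exact le_add_self
  have hstep2 : ∑' i : ℕ, (((2:ℝ≥0∞)⁻¹) ^ (NN i)) ^ s ≤ ε₀ + q ^ (M + 1) * K := by
    calc ∑' i : ℕ, (((2:ℝ≥0∞)⁻¹) ^ (NN i)) ^ s
        ≤ ∑' i : ℕ, (EMetric.diam (U i) ^ s + (((2:ℝ≥0∞)⁻¹) ^ (M + 1 + i)) ^ s) := by
          refine ENNReal.tsum_le_tsum fun i => ?_
          exact le_trans (ENNReal.rpow_le_rpow (hP1 i) hs.le) (hmaxsplit _ _)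
      _ = (∑' i : ℕ, EMetric.diam (U i) ^ s)
            + ∑' i : ℕ, (((2:ℝ≥0∞)⁻¹) ^ (M + 1 + i)) ^ s := ENNReal.tsum_add
      _ ≤ ε₀ + q ^ (M + 1) * K := by
          refine add_le_add hUsum ?_
          have : ∀ i : ℕ, (((2:ℝ≥0∞)⁻¹) ^ (M + 1 + i)) ^ s = q ^ (M + 1) * q ^ i := by
            intro i
            rw [hqq, pow_add]
          rw [tsum_congr this, ENNReal.tsum_mul_left, ENNReal.tsum_geometric]
  -- final chain
  have hfinal : ∑' n, ⨆ _ : (t n).Nonempty, EMetric.diam (t n) ^ d ≤ (η : ℝ≥0∞) := by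
    calc ∑' n, ⨆ _ : (t n).Nonempty, EMetric.diam (t n) ^ d
        ≤ ∑' n, EMetric.diam (t n) ^ d :=
          ENNReal.tsum_le_tsum fun n => iSup_le fun _ => le_rfl
      _ = ∑' p : ℕ × ℕ, EMetric.diam (U p.1 ×ˢ V p.1 p.2) ^ d :=
          Equiv.tsum_eq e fun p => EMetric.diam (U p.1 ×ˢ V p.1 p.2) ^ d
      _ = ∑' i : ℕ, ∑' j : ℕ, EMetric.diam (U i ×ˢ V i j) ^ d := ENNReal.tsum_prod (f := fun i j => EMetric.diam (U i ×ˢ V i j) ^ d)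
      _ ≤ ∑' i : ℕ, P * (((2:ℝ≥0∞)⁻¹) ^ (NN i)) ^ s := ENNReal.tsum_le_tsum hinner
      _ = P * ∑' i : ℕ, (((2:ℝ≥0∞)⁻¹) ^ (NN i)) ^ s := ENNReal.tsum_mul_left
      _ ≤ P * (ε₀ + q ^ (M + 1) * K) := mul_le_mul_right hstep2 P
      _ = P * ε₀ + P * K * q * q ^ M := by rw [mul_add]; ring
      _ ≤ (η : ℝ≥0∞) / 2 + (η : ℝ≥0∞) / 2 := add_le_add ENNReal.mul_div_le hMtail.le
      _ = (η : ℝ≥0∞) := ENNReal.add_halves _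
  refine le_trans (iInf_le_of_le t ?_) hfinal
  exact iInf_le_of_le hcov (iInf_le_of_le hdiam le_rfl)

lemma dimH_prod_le_ubox (A B : Set ℝ) : dimH (A ×ˢ B) ≤ dimH A + ubox B := by
  rcases B.eq_empty_or_nonempty with rfl | hB
  · simp [Set.prod_empty]
  refine ENNReal.le_of_forall_pos_le_add fun ε hε hfin => ?_
  have hAfin : dimH A ≠ ⊤ := fun h => by simp [h] at hfin
  have hBfin : ubox B ≠ ⊤ := fun h => by simp [h] at hfin
  set s : ℝ := (dimH A).toReal + (ε:ℝ)/2 with hsdef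
  set τ : ℝ := (ubox B).toReal + (ε:ℝ)/2 with hτdef
  have hε2 : (0:ℝ) < (ε:ℝ)/2 := by positivity
  have hs : 0 < s := by positivity
  have hτ : 0 < τ := by positivity
  have hofs : ENNReal.ofReal s = dimH A + ENNReal.ofReal ((ε:ℝ)/2) := by
    rw [hsdef, ENNReal.ofReal_add ENNReal.toReal_nonneg hε2.le, ENNReal.ofReal_toReal hAfin]
  have hofτ : ENNReal.ofReal τ = ubox B + ENNReal.ofReal ((ε:ℝ)/2) := by
    rw [hτdef, ENNReal.ofReal_add ENNReal.toReal_nonneg hε2.le, ENNReal.ofReal_toReal hBfin]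
  have hdA : dimH A < ENNReal.ofReal s := by
    rw [hofs]
    exact ENNReal.lt_add_right hAfin (by simp [ENNReal.ofReal_eq_zero, hε2.not_ge])
  have hub : ubox B < ENNReal.ofReal τ := by
    rw [hofτ]
    exact ENNReal.lt_add_right hBfin (by simp [ENNReal.ofReal_eq_zero, hε2.not_ge])
  -- μH[s] A = 0
  have hdA' : dimH A < (s.toNNReal : ℝ≥0∞) := hdA
  have hμA := hausdorffMeasure_of_dimH_lt hdA'
  rw [Real.coe_toNNReal _ hs.le] at hμA
  have hμ := key A B hB s τ hs hμA hub
  have hne : μH[(((s + τ).toNNReal : NNReal) : ℝ)] (A ×ˢ B) ≠ ⊤ := by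
    rw [Real.coe_toNNReal _ (by positivity : (0:ℝ) ≤ s + τ), hμ]
    simp
  have hle := dimH_le_of_hausdorffMeasure_ne_top hne
  have : (((s + τ).toNNReal : NNReal) : ℝ≥0∞) = ENNReal.ofReal (s + τ) := rfl
  rw [this, ENNReal.ofReal_add hs.le hτ.le, hofs, hofτ] at hle
  refine hle.trans (le_of_eq ?_)
  have : ENNReal.ofReal ((ε:ℝ)/2) = (ε : ℝ≥0∞) / 2 := by
    rw [ENNReal.ofReal_div_of_pos (by norm_num), ENNReal.ofReal_coe_nnreal]
    norm_num
  rw [this]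
  calc dimH A + (ε:ℝ≥0∞)/2 + (ubox B + (ε:ℝ≥0∞)/2)
      = dimH A + ubox B + ((ε:ℝ≥0∞)/2 + (ε:ℝ≥0∞)/2) := by ring
    _ = dimH A + ubox B + ε := by rw [ENNReal.add_halves]

theorem stmt0 (A A' : Set ℝ) (hA : MeasurableSet A) (hA' : MeasurableSet A') :
    dimH (A ×ˢ A' : Set (ℝ × ℝ)) ≤ dimH A + packDim A' := by
  have H : ∀ f : ℕ → Set ℝ, A' ⊆ ⋃ n, f n →
      dimH (A ×ˢ A' : Set (ℝ × ℝ)) ≤ dimH A + ⨆ n, ubox (f n) := by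
    intro f hf
    have hsub : A ×ˢ A' ⊆ ⋃ n, A ×ˢ f n := by
      rintro ⟨a, b⟩ ⟨ha, hb⟩
      have := hf hb
      rw [Set.mem_iUnion] at this ⊢
      obtain ⟨n, hn⟩ := this
      exact ⟨n, ha, hn⟩
    calc dimH (A ×ˢ A' : Set (ℝ × ℝ)) ≤ dimH (⋃ n, A ×ˢ f n) := dimH_mono hsub
      _ = ⨆ n, dimH (A ×ˢ f n) := dimH_iUnion _
      _ ≤ ⨆ n, (dimH A + ubox (f n)) := iSup_mono fun n => dimH_prod_le_ubox A (f n)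
      _ ≤ dimH A + ⨆ n, ubox (f n) := iSup_le fun n => add_le_add_right (le_iSup (fun n => ubox (f n)) n) (dimH A)
  rw [packDim, ENNReal.add_iInf]
  refine le_iInf fun f => ?_
  rw [ENNReal.add_iInf]
  exact le_iInf fun hf => H f hf
end

section
/- If A ⊆ ℝ is a Borel set with packing dimension 0, then the product set AA = {a·b : a, b ∈ A} has Hausdorff dimension 0. -/
open Filter MeasureTheory Set Pointwise
open scoped ENNReal
open scoped NNReal

lemma covN_mono {A B : Set ℝ} (h : A ⊆ B) (r : ℝ) : covN A r ≤ covN B r :=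
  le_iInf₂ fun t ht => iInf₂_le t (h.trans ht)

lemma covN_le_of_cover {A : Set ℝ} {r : ℝ} {t : Finset ℝ}
    (h : A ⊆ ⋃ x ∈ t, Metric.closedBall x r) : covN A r ≤ t.card :=
  iInf₂_le t h

lemma exists_cover_card_le {A : Set ℝ} {r : ℝ} (h : covN A r ≠ ⊤) :
    ∃ t : Finset ℝ, (A ⊆ ⋃ x ∈ t, Metric.closedBall x r) ∧ t.card ≤ (covN A r).toNat := by
  by_contra hc
  push_neg at hc
  have h1 : ((covN A r).toNat + 1 : ℕ∞) ≤ covN A r := by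
    refine le_iInf₂ fun t ht => ?_
    exact_mod_cast hc t ht
  rw [(ENat.coe_toNat h).symm] at h1
  exact_mod_cast (Nat.not_succ_le_self _) (by exact_mod_cast h1)

lemma ubox_mono {A B : Set ℝ} (h : A ⊆ B) : ubox A ≤ ubox B := by
  refine Filter.limsup_le_limsup (Eventually.of_forall fun N => ?_)
  simp only
  by_cases hB : covN B ((2:ℝ)⁻¹ ^ N) = ⊤
  · rw [if_pos hB]; exact le_top
  have hA : covN A ((2:ℝ)⁻¹ ^ N) ≠ ⊤ := fun hh => hB (top_le_iff.mp (hh ▸ covN_mono h _))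
  rw [if_neg hA, if_neg hB]
  apply ENNReal.ofReal_le_ofReal
  have hmono : Real.logb 2 ((covN A ((2:ℝ)⁻¹ ^ N)).toNat : ℝ)
      ≤ Real.logb 2 ((covN B ((2:ℝ)⁻¹ ^ N)).toNat : ℝ) := by
    rcases Nat.eq_zero_or_pos (covN A ((2:ℝ)⁻¹ ^ N)).toNat with h0 | h0
    · rw [h0]
      simp only [Nat.cast_zero, Real.logb_zero]
      rcases Nat.eq_zero_or_pos (covN B ((2:ℝ)⁻¹ ^ N)).toNat with h1 | h1
      · rw [h1]; norm_num
      · exact Real.logb_nonneg one_lt_two (by exact_mod_cast h1)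
    · apply Real.logb_le_logb_of_le one_lt_two (by exact_mod_cast h0)
      exact_mod_cast ENat.toNat_le_toNat (covN_mono h _) hB
  gcongr

lemma covN_small {E : Set ℝ} {a : ℝ} (ha : 0 < a) (h : ubox E < ENNReal.ofReal a) :
    ∀ᶠ N : ℕ in atTop, ∃ t : Finset ℝ,
      (E ⊆ ⋃ x ∈ t, Metric.closedBall x ((2:ℝ)⁻¹ ^ N)) ∧ (t.card : ℝ) ≤ (2:ℝ) ^ (a * N) := by
  have hev := Filter.eventually_lt_of_limsup_lt h
  filter_upwards [hev, Filter.eventually_ge_atTop 1] with N hN hN1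
  have hne : covN E ((2:ℝ)⁻¹ ^ N) ≠ ⊤ := by
    intro hh
    rw [if_pos hh] at hN
    exact (lt_irrefl _ (hN.trans_le le_top)).elim
  rw [if_neg hne] at hN
  obtain ⟨t, ht, hcard⟩ := exists_cover_card_le hne
  refine ⟨t, ht, ?_⟩
  set m := (covN E ((2:ℝ)⁻¹ ^ N)).toNat with hm
  have hlt : Real.logb 2 m / N < a :=
    (ENNReal.ofReal_lt_ofReal_iff ha).mp hN
  have hNpos : (0:ℝ) < N := by exact_mod_cast hN1
  have hlt2 : Real.logb 2 m < a * N := by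
    rw [div_lt_iff₀ hNpos] at hlt; linarith
  have hcard' : (t.card : ℝ) ≤ m := by exact_mod_cast hcard
  rcases Nat.eq_zero_or_pos m with h0 | h0
  · refine hcard'.trans ?_
    rw [h0, Nat.cast_zero]
    positivity
  · refine hcard'.trans ?_
    have := (Real.logb_lt_iff_lt_rpow one_lt_two (by exact_mod_cast h0)).mp hlt2
    exact this.le

lemma key_s2 {E F : Set ℝ} {R : ℝ} (hR : 1 ≤ R)
    (hE : E ⊆ Metric.closedBall 0 R) (hF : F ⊆ Metric.closedBall 0 R)
    {a b : ℝ} (ha : 0 < a) (hb : 0 < b)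
    (hEa : ubox E < ENNReal.ofReal a) (hFb : ubox F < ENNReal.ofReal b)
    {d : ℝ} (hd : a + b < d) : μH[d] (E * F) = 0 := by
  have hR0 : (0:ℝ) < R := lt_of_lt_of_le one_pos hR
  have hd0 : 0 ≤ d := le_of_lt (lt_of_le_of_lt (by positivity) hd)
  -- eventual covers of E * F
  have hcov : ∀ᶠ N : ℕ in atTop, ∃ T : Finset (ℝ × ℝ),
      (E * F ⊆ ⋃ p ∈ T, Metric.closedBall (p.1 * p.2) (3*R*((2:ℝ)⁻¹ ^ N))) ∧
      (T.card : ℝ) ≤ (2:ℝ) ^ (a * N) * (2:ℝ) ^ (b * N) := by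
    filter_upwards [covN_small ha hEa, covN_small hb hFb] with N hNE hNF
    obtain ⟨t, ht, htc⟩ := hNE
    obtain ⟨u, hu, huc⟩ := hNF
    set r : ℝ := (2:ℝ)⁻¹ ^ N with hr
    have hr0 : 0 ≤ r := by positivity
    have hr1 : r ≤ 1 := by
      rw [hr]; exact pow_le_one₀ (by norm_num) (by norm_num)
    refine ⟨t ×ˢ u, ?_, ?_⟩
    · rintro z hz
      rw [Set.mem_mul] at hz
      obtain ⟨e, he, f, hf, rfl⟩ := hz
      obtain ⟨x, hx, hex⟩ := Set.mem_iUnion₂.mp (ht he)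
      obtain ⟨y, hy, hfy⟩ := Set.mem_iUnion₂.mp (hu hf)
      refine Set.mem_iUnion₂.mpr ⟨(x, y), Finset.mem_product.mpr ⟨hx, hy⟩, ?_⟩
      rw [Metric.mem_closedBall] at hex hfy ⊢
      have heR : |e| ≤ R := by
        have := hE he; rwa [Metric.mem_closedBall, Real.dist_0_eq_abs] at this
      have hfR : |f| ≤ R := by
        have := hF hf; rwa [Metric.mem_closedBall, Real.dist_0_eq_abs] at this
      have hex' : |e - x| ≤ r := by rwa [Real.dist_eq] at hex
      have hfy' : |f - y| ≤ r := by rwa [Real.dist_eq] at hfy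
      have hxR : |x| ≤ 2*R := by
        have : |x| ≤ |e| + |x - e| := by
          calc |x| = |e + (x - e)| := by ring_nf
          _ ≤ |e| + |x - e| := abs_add_le _ _
        rw [abs_sub_comm] at this
        linarith [hex'.trans hr1]
      rw [Real.dist_eq]
      have : e * f - x * y = (e - x) * f + x * (f - y) := by ring
      calc |e * f - x * y| = |(e - x) * f + x * (f - y)| := by rw [this]
        _ ≤ |(e - x) * f| + |x * (f - y)| := abs_add_le _ _
        _ = |e - x| * |f| + |x| * |f - y| := by rw [abs_mul, abs_mul]
        _ ≤ r * R + (2*R) * r := by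
            have := abs_nonneg (e - x)
            have := abs_nonneg (f - y)
            have := abs_nonneg x
            have := abs_nonneg f
            nlinarith
        _ ≤ 3*R*r := by nlinarith
    · rw [Finset.card_product]
      push_cast
      exact mul_le_mul htc huc (by positivity) (by positivity)
  -- choose covers
  set P : ℕ → Prop := fun N => ∃ T : Finset (ℝ × ℝ),
      (E * F ⊆ ⋃ p ∈ T, Metric.closedBall (p.1 * p.2) (3*R*((2:ℝ)⁻¹ ^ N))) ∧
      (T.card : ℝ) ≤ (2:ℝ) ^ (a * N) * (2:ℝ) ^ (b * N) with hP
  classical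
  set T : ℕ → Finset (ℝ × ℝ) := fun N => if h : P N then h.choose else ∅ with hT
  have hTspec : ∀ᶠ N : ℕ in atTop,
      (E * F ⊆ ⋃ p ∈ T N, Metric.closedBall (p.1 * p.2) (3*R*((2:ℝ)⁻¹ ^ N))) ∧
      ((T N).card : ℝ) ≤ (2:ℝ) ^ (a * N) * (2:ℝ) ^ (b * N) := by
    filter_upwards [hcov] with N hN
    rw [hT]; simp only [dif_pos hN]
    exact hN.choose_spec
  -- apply MeasureTheory.Measure.hausdorffMeasure_le_liminf_sum
  have hmain : μH[d] (E * F) ≤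
      liminf (fun N : ℕ => ∑ p : (T N : Finset (ℝ × ℝ)),
        (EMetric.diam (Metric.closedBall ((p : ℝ × ℝ).1 * (p : ℝ × ℝ).2) (3*R*((2:ℝ)⁻¹ ^ N))))^d) atTop := by
    apply MeasureTheory.Measure.hausdorffMeasure_le_liminf_sum d (E * F)
      (fun N : ℕ => ENNReal.ofReal (6*R*((2:ℝ)⁻¹ ^ N)))
    · -- tendsto 0
      rw [show (0 : ℝ≥0∞) = ENNReal.ofReal 0 by simp]
      apply ENNReal.tendsto_ofReal
      rw [show (0:ℝ) = 6*R*0 by ring]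
      exact (tendsto_pow_atTop_nhds_zero_of_lt_one (by norm_num) (by norm_num)).const_mul _
    · -- diam bound
      filter_upwards with N
      intro p
      apply EMetric.diam_le
      intro x hx y hy
      rw [edist_dist]
      apply ENNReal.ofReal_le_ofReal
      rw [Metric.mem_closedBall] at hx hy
      calc dist x y ≤ dist x ((p : ℝ × ℝ).1 * (p : ℝ × ℝ).2) + dist ((p : ℝ × ℝ).1 * (p : ℝ × ℝ).2) y := dist_triangle _ _ _
        _ ≤ 3*R*((2:ℝ)⁻¹ ^ N) + 3*R*((2:ℝ)⁻¹ ^ N) := by rw [dist_comm ((p : ℝ × ℝ).1 * (p : ℝ × ℝ).2) y] at *; exact add_le_add hx hy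
        _ = 6*R*((2:ℝ)⁻¹ ^ N) := by ring
    · -- cover
      filter_upwards [hTspec] with N hN
      intro z hz
      obtain ⟨p, hp, hball⟩ := Set.mem_iUnion₂.mp (hN.1 hz)
      exact Set.mem_iUnion.mpr ⟨⟨p, hp⟩, hball⟩
  -- compare the sums with an explicit sequence tending to zero
  set G : ℕ → ℝ := fun N => ((2:ℝ) ^ (a * N) * (2:ℝ) ^ (b * N)) * (6*R*((2:ℝ)⁻¹ ^ N))^d with hG
  have hdiam : ∀ (N : ℕ) (p : ℝ × ℝ),
      EMetric.diam (Metric.closedBall (p.1 * p.2) (3*R*((2:ℝ)⁻¹ ^ N)))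
        ≤ ENNReal.ofReal (6*R*((2:ℝ)⁻¹ ^ N)) := by
    intro N p
    apply EMetric.diam_le
    intro x hx y hy
    rw [edist_dist]
    apply ENNReal.ofReal_le_ofReal
    rw [Metric.mem_closedBall] at hx hy
    calc dist x y ≤ dist x (p.1 * p.2) + dist (p.1 * p.2) y := dist_triangle _ _ _
      _ ≤ 3*R*((2:ℝ)⁻¹ ^ N) + 3*R*((2:ℝ)⁻¹ ^ N) := by
          rw [dist_comm (p.1 * p.2) y]; exact add_le_add hx hy
      _ = 6*R*((2:ℝ)⁻¹ ^ N) := by ring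
  have hsum : ∀ᶠ N : ℕ in atTop, (∑ p : (T N : Finset (ℝ × ℝ)),
        (EMetric.diam (Metric.closedBall ((p : ℝ × ℝ).1 * (p : ℝ × ℝ).2) (3*R*((2:ℝ)⁻¹ ^ N))))^d)
        ≤ ENNReal.ofReal (G N) := by
    filter_upwards [hTspec] with N hN
    have hrn : (0:ℝ) ≤ 6*R*((2:ℝ)⁻¹ ^ N) := by positivity
    calc (∑ p : (T N : Finset (ℝ × ℝ)),
        (EMetric.diam (Metric.closedBall ((p : ℝ × ℝ).1 * (p : ℝ × ℝ).2) (3*R*((2:ℝ)⁻¹ ^ N))))^d)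
        ≤ ∑ _p : (T N : Finset (ℝ × ℝ)), (ENNReal.ofReal (6*R*((2:ℝ)⁻¹ ^ N)))^d :=
          Finset.sum_le_sum fun p _ => ENNReal.rpow_le_rpow (hdiam N p) hd0
      _ = ((T N).card : ℝ≥0∞) * (ENNReal.ofReal (6*R*((2:ℝ)⁻¹ ^ N)))^d := by
          rw [Finset.sum_const, Finset.card_univ, Fintype.card_coe, nsmul_eq_mul]
      _ ≤ ENNReal.ofReal ((2:ℝ) ^ (a * N) * (2:ℝ) ^ (b * N)) * ENNReal.ofReal ((6*R*((2:ℝ)⁻¹ ^ N))^d) := by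
          apply mul_le_mul' ?_ ?_
          · rw [← ENNReal.ofReal_natCast]
            exact ENNReal.ofReal_le_ofReal hN.2
          · rw [ENNReal.ofReal_rpow_of_nonneg hrn hd0]
      _ = ENNReal.ofReal (G N) := by
          rw [← ENNReal.ofReal_mul (by positivity)]
  have hGlim : Tendsto (fun N : ℕ => ENNReal.ofReal (G N)) atTop (nhds 0) := by
    set q : ℝ := (2:ℝ) ^ (a + b - d) with hq
    have hq0 : 0 ≤ q := Real.rpow_nonneg (by norm_num) _
    have hq1 : q < 1 := Real.rpow_lt_one_of_one_lt_of_neg one_lt_two (by linarith)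
    have hGeq : ∀ N : ℕ, G N = ((6*R)^d) * q^N := by
      intro N
      have h2N : ((2:ℝ)⁻¹ ^ N) = (2:ℝ) ^ (-(N:ℝ)) := by
        rw [Real.rpow_neg (by norm_num), Real.rpow_natCast, inv_pow]
      have hqN : q ^ N = (2:ℝ) ^ ((a+b-d) * N) := by
        rw [← Real.rpow_natCast q N, hq, ← Real.rpow_mul (by norm_num)]
      have hmul : (6*R*((2:ℝ)⁻¹ ^ N))^d = (6*R)^d * (2:ℝ)^((-(N:ℝ)) * d) := by
        rw [h2N, Real.mul_rpow (by positivity) (Real.rpow_nonneg (by norm_num) _),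
          ← Real.rpow_mul (by norm_num)]
      have hexp : (2:ℝ)^(a * N) * (2:ℝ)^(b * N) * (2:ℝ)^((-(N:ℝ)) * d)
          = (2:ℝ)^((a+b-d) * N) := by
        rw [← Real.rpow_add (by norm_num : (0:ℝ) < 2), ← Real.rpow_add (by norm_num : (0:ℝ) < 2)]
        ring_nf
      rw [hG]
      simp only
      rw [hmul, hqN, ← hexp]
      ring
    simp only [hGeq]
    rw [show (0 : ℝ≥0∞) = ENNReal.ofReal 0 by simp]
    apply ENNReal.tendsto_ofReal
    rw [show (0:ℝ) = ((6*R)^d) * 0 by ring]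
    exact (tendsto_pow_atTop_nhds_zero_of_lt_one hq0 hq1).const_mul _
  refine le_antisymm ?_ zero_le
  calc μH[d] (E * F) ≤ _ := hmain
    _ ≤ liminf (fun N : ℕ => ENNReal.ofReal (G N)) atTop := Filter.liminf_le_liminf hsum
    _ = 0 := hGlim.liminf_eq

lemma dimH_mul_le {E F : Set ℝ} {R : ℝ} (hR : 1 ≤ R)
    (hE : E ⊆ Metric.closedBall 0 R) (hF : F ⊆ Metric.closedBall 0 R) :
    dimH (E * F) ≤ ubox E + ubox F := by
  by_cases hET : ubox E = ⊤
  · simp [hET]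
  by_cases hFT : ubox F = ⊤
  · simp [hFT]
  apply dimH_le
  intro d' hd'
  by_contra hlt
  push_neg at hlt
  have hSne : ubox E + ubox F ≠ ⊤ := ENNReal.add_ne_top.mpr ⟨hET, hFT⟩
  have hS : (ubox E + ubox F).toReal < (d' : ℝ) := by
    have := (ENNReal.toReal_lt_toReal hSne ENNReal.coe_ne_top).mpr hlt
    simpa using this
  set δ : ℝ := ((d' : ℝ) - (ubox E + ubox F).toReal) / 3 with hδdef
  have hδ : 0 < δ := by rw [hδdef]; linarith
  set a : ℝ := (ubox E).toReal + δ with hadef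
  set b : ℝ := (ubox F).toReal + δ with hbdef
  have ha : 0 < a := by
    have := ENNReal.toReal_nonneg (a := ubox E); rw [hadef]; linarith
  have hb : 0 < b := by
    have := ENNReal.toReal_nonneg (a := ubox F); rw [hbdef]; linarith
  have hEa : ubox E < ENNReal.ofReal a := by
    conv_lhs => rw [← ENNReal.ofReal_toReal hET]
    exact (ENNReal.ofReal_lt_ofReal_iff ha).mpr (by rw [hadef]; linarith)
  have hFb : ubox F < ENNReal.ofReal b := by
    conv_lhs => rw [← ENNReal.ofReal_toReal hFT]
    exact (ENNReal.ofReal_lt_ofReal_iff hb).mpr (by rw [hbdef]; linarith)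
  have hab : a + b < (d' : ℝ) := by
    have := ENNReal.toReal_add hET hFT
    rw [hadef, hbdef]
    rw [this] at hS hδdef
    linarith
  have h0 := key_s2 hR hE hF ha hb hEa hFb hab
  rw [hd'] at h0
  exact ENNReal.top_ne_zero h0

theorem stmt2 (A : Set ℝ) (hA : MeasurableSet A) (hpack : packDim A = 0) :
    dimH (A * A) = 0 := by
  refine le_antisymm ?_ zero_le
  refine ENNReal.le_of_forall_pos_le_add fun ε hε _ => ?_
  rw [zero_add]
  have h2 : packDim A < ((ε / 2 : ℝ≥0) : ℝ≥0∞) := by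
    rw [hpack]
    exact_mod_cast half_pos hε
  rw [packDim, iInf_lt_iff] at h2
  obtain ⟨f, h2⟩ := h2
  rw [iInf_lt_iff] at h2
  obtain ⟨hf, hsup⟩ := h2
  have hone : ∀ n : ℕ, ubox (f n) < ((ε / 2 : ℝ≥0) : ℝ≥0∞) :=
    fun n => lt_of_le_of_lt (le_iSup (fun n => ubox (f n)) n) hsup
  set g : ℕ × ℕ → Set ℝ := fun p => f p.1 ∩ Metric.closedBall 0 (p.2 + 1) with hg
  have hcover : A * A ⊆ ⋃ q : (ℕ × ℕ) × (ℕ × ℕ), g q.1 * g q.2 := by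
    rintro z hz
    rw [Set.mem_mul] at hz
    obtain ⟨x, hx, y, hy, rfl⟩ := hz
    obtain ⟨n, hn⟩ := Set.mem_iUnion.mp (hf hx)
    obtain ⟨m, hm⟩ := Set.mem_iUnion.mp (hf hy)
    obtain ⟨k, hk⟩ := exists_nat_ge |x|
    obtain ⟨l, hl⟩ := exists_nat_ge |y|
    refine Set.mem_iUnion.mpr ⟨((n, k), (m, l)), ?_⟩
    apply Set.mul_mem_mul
    · exact ⟨hn, by rw [Metric.mem_closedBall, Real.dist_0_eq_abs]; linarith⟩
    · exact ⟨hm, by rw [Metric.mem_closedBall, Real.dist_0_eq_abs]; linarith⟩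
  calc dimH (A * A) ≤ dimH (⋃ q : (ℕ × ℕ) × (ℕ × ℕ), g q.1 * g q.2) := dimH_mono hcover
    _ = ⨆ q : (ℕ × ℕ) × (ℕ × ℕ), dimH (g q.1 * g q.2) := dimH_iUnion _
    _ ≤ (ε : ℝ≥0∞) := by
        refine iSup_le fun q => ?_
        set R : ℝ := (q.1.2 : ℝ) + (q.2.2 : ℝ) + 1 with hRdef
        have hR : 1 ≤ R := by
          have h01 := Nat.cast_nonneg (α := ℝ) q.1.2
          have h02 := Nat.cast_nonneg (α := ℝ) q.2.2
          rw [hRdef]; linarith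
        have hsub1 : g q.1 ⊆ Metric.closedBall 0 R := by
          refine (Set.inter_subset_right).trans (Metric.closedBall_subset_closedBall ?_)
          rw [hRdef]; push_cast; linarith [Nat.cast_nonneg (α := ℝ) q.2.2]
        have hsub2 : g q.2 ⊆ Metric.closedBall 0 R := by
          refine (Set.inter_subset_right).trans (Metric.closedBall_subset_closedBall ?_)
          rw [hRdef]; push_cast; linarith [Nat.cast_nonneg (α := ℝ) q.1.2]
        refine (dimH_mul_le hR hsub1 hsub2).trans ?_
        have h1 : ubox (g q.1) ≤ ubox (f q.1.1) := ubox_mono Set.inter_subset_left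
        have h2 : ubox (g q.2) ≤ ubox (f q.2.1) := ubox_mono Set.inter_subset_left
        calc ubox (g q.1) + ubox (g q.2)
            ≤ ((ε / 2 : ℝ≥0) : ℝ≥0∞) + ((ε / 2 : ℝ≥0) : ℝ≥0∞) :=
              add_le_add (h1.trans (hone _).le) (h2.trans (hone _).le)
          _ = (ε : ℝ≥0∞) := by rw [← ENNReal.coe_add, add_halves]
end

section
/- If every subset of ℕ with positive lower natural density contains arbitrarily long arithmetic progressions, then every subset of ℕ with positive upper natural density contains arbitrarily long arithmetic progressions. -/
/-- `A` contains an `m`-term arithmetic progression. -/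
def HasAP (A : Set ℕ) (m : ℕ) : Prop :=
  ∃ a d : ℕ, 1 ≤ d ∧ ∀ t < m, a + t * d ∈ A

/-- Lower natural density of a set of naturals. -/
noncomputable def lowerDensity (A : Set ℕ) : ℝ :=
  Filter.liminf (fun n : ℕ => ((A ∩ Set.Icc 1 n).ncard : ℝ) / n) Filter.atTop

/-- Upper natural density of a set of naturals. -/
noncomputable def upperDensity (A : Set ℕ) : ℝ :=
  Filter.limsup (fun n : ℕ => ((A ∩ Set.Icc 1 n).ncard : ℝ) / n) Filter.atTop

namespace Stmt15Aux

/-- counting function on half-open intervals -/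
noncomputable def cnt (A : Set ℕ) (s t : ℕ) : ℕ := (A ∩ Set.Ioc s t).ncard

lemma finite_inter (A : Set ℕ) (s t : ℕ) : (A ∩ Set.Ioc s t).Finite :=
  (Set.finite_Ioc s t).inter_of_right A

lemma cnt_le (A : Set ℕ) (s t : ℕ) : cnt A s t ≤ t - s := by
  have h1 : (A ∩ Set.Ioc s t).ncard ≤ (Set.Ioc s t).ncard :=
    Set.ncard_le_ncard Set.inter_subset_right (Set.finite_Ioc s t)
  have h2 : (Set.Ioc s t).ncard = t - s := by
    rw [← Finset.coe_Ioc, Set.ncard_coe_finset, Nat.card_Ioc]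
  exact h2 ▸ h1

lemma cnt_add (A : Set ℕ) {s u t : ℕ} (h1 : s ≤ u) (h2 : u ≤ t) :
    cnt A s t = cnt A s u + cnt A u t := by
  unfold cnt
  rw [← Set.Ioc_union_Ioc_eq_Ioc h1 h2, Set.inter_union_distrib_left]
  exact Set.ncard_union_eq (Set.disjoint_left.2 (by
      rintro x ⟨-, hx1⟩ ⟨-, hx2⟩
      exact absurd hx1.2 (not_le.2 hx2.1)))
    (finite_inter A s u) (finite_inter A u t)

lemma Icc_one_eq_Ioc (n : ℕ) : Set.Icc 1 n = Set.Ioc 0 n := by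
  ext x; simp [Nat.lt_iff_add_one_le]

/-- From positive upper density: dense windows of every length. -/
lemma exists_dense_window (A : Set ℕ) (hc : 0 < upperDensity A) (ℓ : ℕ) (hℓ : 1 ≤ ℓ) :
    ∃ s : ℕ, (upperDensity A / 3) * ℓ ≤ (cnt A s (s + ℓ) : ℝ) := by
  set c := upperDensity A with hcdef
  by_contra hcon
  push_neg at hcon
  -- all windows of length ℓ have < (c/3)ℓ elements
  have hbl : ∀ q : ℕ, (cnt A 0 (q * ℓ) : ℝ) ≤ q * ((c / 3) * ℓ) := by
    intro q
    induction q with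
    | zero => simp [cnt]
    | succ q ih =>
      have hstep : cnt A 0 ((q + 1) * ℓ) = cnt A 0 (q * ℓ) + cnt A (q * ℓ) (q * ℓ + ℓ) := by
        have := cnt_add A (Nat.zero_le (q * ℓ)) (Nat.le_add_right (q * ℓ) ℓ)
        simpa [Nat.succ_mul] using this
      have h2 := le_of_lt (hcon (q * ℓ))
      rw [hstep]
      push_cast
      push_cast at ih
      nlinarith
  -- pick a large n with density > c/2
  have hcob : Filter.IsCoboundedUnder (· ≤ ·) Filter.atTop
      (fun n : ℕ => ((A ∩ Set.Icc 1 n).ncard : ℝ) / n) := by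
    apply Filter.IsBoundedUnder.isCoboundedUnder_le
    apply Filter.isBoundedUnder_of
    refine ⟨0, fun n => ?_⟩
    show ((A ∩ Set.Icc 1 n).ncard : ℝ) / n ≥ 0
    exact div_nonneg (Nat.cast_nonneg _) (Nat.cast_nonneg _)
  have hlt : c / 2 < upperDensity A := by linarith
  have hfreq : ∃ᶠ n : ℕ in Filter.atTop,
      c / 2 < ((A ∩ Set.Icc 1 n).ncard : ℝ) / n :=
    Filter.frequently_lt_of_lt_limsup hcob hlt
  -- choose n beyond the threshold
  obtain ⟨n, hn, hdn⟩ := (hfreq.and_eventually (Filter.eventually_ge_atTop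
      (max ℓ (Nat.ceil (6 * ℓ / c))))).exists
  have hnl : ℓ ≤ n := le_trans (le_max_left _ _) hdn
  have hn6 : (6 * ℓ / c : ℝ) ≤ n := by
    calc (6 * ℓ / c : ℝ) ≤ Nat.ceil (6 * ℓ / c : ℝ) := Nat.le_ceil _
    _ ≤ n := by exact_mod_cast le_trans (le_max_right _ _) hdn
  have hnpos : 0 < n := lt_of_lt_of_le hℓ hnl
  -- count(0,n) > (c/2) n
  have hnR : (0:ℝ) < n := Nat.cast_pos.2 hnpos
  have hcount : (c / 2) * n < (cnt A 0 n : ℝ) := by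
    have h1 : c / 2 * n < ((A ∩ Set.Icc 1 n).ncard : ℝ) := (lt_div_iff₀ hnR).1 hn
    calc (c / 2) * n < ((A ∩ Set.Icc 1 n).ncard : ℝ) := h1
    _ = (cnt A 0 n : ℝ) := by rw [Icc_one_eq_Ioc]; rfl
  set q := n / ℓ with hq
  have hq1 : q * ℓ ≤ n := Nat.div_mul_le_self n ℓ
  have hq2 : n - q * ℓ < ℓ := by
    have h1 : q * ℓ + n % ℓ = n := by rw [Nat.mul_comm]; exact Nat.div_add_mod n ℓ
    have h2 : n % ℓ < ℓ := Nat.mod_lt n (by omega)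
    omega
  have hsplit : cnt A 0 n = cnt A 0 (q * ℓ) + cnt A (q * ℓ) n :=
    cnt_add A (Nat.zero_le _) hq1
  have htail : (cnt A (q * ℓ) n : ℝ) ≤ ℓ := by
    have := cnt_le A (q * ℓ) n
    have : cnt A (q * ℓ) n ≤ ℓ := by omega
    exact_mod_cast this
  have hqn : ((q : ℝ) * ℓ) ≤ n := by exact_mod_cast hq1
  have hmain : (cnt A 0 n : ℝ) ≤ (c / 3) * n + ℓ := by
    have h1 := hbl q
    rw [hsplit]
    push_cast
    have hc3 : (0:ℝ) ≤ c / 3 := by linarith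
    nlinarith
  -- contradiction: (c/2)n < (c/3)n + ℓ  together with  n ≥ 6ℓ/c
  have hlpos : (0:ℝ) < ℓ := by exact_mod_cast hℓ
  have : (c / 6) * n < ℓ := by linarith
  rw [div_le_iff₀ hc] at hn6
  nlinarith

/-- block boundaries -/
def eB (i : ℕ) : ℕ := 2 ^ (i + 1) - 2

lemma eB_mono : StrictMono eB := by
  intro i j hij
  have h1 : 2 ^ (i + 1) < 2 ^ (j + 1) := Nat.pow_lt_pow_right one_lt_two (by omega)
  have h2 : 2 ≤ 2 ^ (i + 1) := Nat.one_lt_two_pow_iff.2 (by omega)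
  unfold eB; omega

lemma eB_succ (i : ℕ) : eB (i + 1) = eB i + 2 ^ (i + 1) := by
  have h2 : 2 ≤ 2 ^ (i + 1) := Nat.one_lt_two_pow_iff.2 (by omega)
  unfold eB
  have : 2 ^ (i + 1 + 1) = 2 ^ (i + 1) + 2 ^ (i + 1) := by ring
  omega

/-- the pasted set -/
def Bset (A : Set ℕ) (w : ℕ → ℕ) : Set ℕ :=
  {x | ∃ i, 1 ≤ i ∧ x ∈ Set.Ioc (eB (i - 1)) (eB i) ∧ w i + (x - eB (i - 1)) ∈ A}

lemma memA_of_block (A : Set ℕ) (w : ℕ → ℕ) {j u : ℕ} (hj : 1 ≤ j)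
    (hu : u ∈ Bset A w) (h1 : eB (j - 1) < u) (h2 : u ≤ eB j) :
    w j + (u - eB (j - 1)) ∈ A := by
  obtain ⟨i, hi1, ⟨hiu1, hiu2⟩, hA⟩ := hu
  have hij : i = j := by
    rcases lt_trichotomy i j with hlt | heq | hgt
    · exfalso
      have : eB i ≤ eB (j - 1) := eB_mono.le_iff_le.2 (by omega)
      omega
    · exact heq
    · exfalso
      have : eB j ≤ eB (i - 1) := eB_mono.le_iff_le.2 (by omega)
      omega
  subst hij
  exact hA

/-- block count lower bound -/
lemma block_count (A : Set ℕ) (w : ℕ → ℕ) (i : ℕ) (hi : 1 ≤ i) :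
    cnt A (w i) (w i + 2 ^ i) ≤ cnt (Bset A w) (eB (i - 1)) (eB i) := by
  classical
  unfold cnt
  have key : (fun y => eB (i - 1) + (y - w i)) '' (A ∩ Set.Ioc (w i) (w i + 2 ^ i))
      ⊆ Bset A w ∩ Set.Ioc (eB (i - 1)) (eB i) := by
    rintro x ⟨y, ⟨hyA, hy1, hy2⟩, hxy⟩
    have hxy' : eB (i - 1) + (y - w i) = x := hxy
    have hei : eB i = eB (i - 1) + 2 ^ i := by
      have := eB_succ (i - 1)
      have hi1 : i - 1 + 1 = i := by omega
      rw [hi1] at this; exact this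
    constructor
    · refine ⟨i, hi, ⟨by omega, by omega⟩, ?_⟩
      have h1 : x - eB (i - 1) = y - w i := by omega
      rw [h1]
      have h2 : w i + (y - w i) = y := by omega
      rw [h2]; exact hyA
    · exact ⟨by omega, by omega⟩
  calc (A ∩ Set.Ioc (w i) (w i + 2 ^ i)).ncard
      = ((fun y => eB (i - 1) + (y - w i)) '' (A ∩ Set.Ioc (w i) (w i + 2 ^ i))).ncard := by
        rw [Set.ncard_image_of_injOn]
        rintro y1 ⟨-, hy1, -⟩ y2 ⟨-, hy2, -⟩ hyy
        have hyy' : eB (i - 1) + (y1 - w i) = eB (i - 1) + (y2 - w i) := hyy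
        omega
    _ ≤ (Bset A w ∩ Set.Ioc (eB (i - 1)) (eB i)).ncard :=
        Set.ncard_le_ncard key (finite_inter _ _ _)

lemma prefix_count (A : Set ℕ) (w : ℕ → ℕ) (ρ : ℝ) (hρ : 0 ≤ ρ)
    (hw : ∀ i, 1 ≤ i → ρ * 2 ^ i ≤ (cnt A (w i) (w i + 2 ^ i) : ℝ)) (j : ℕ) :
    ρ * eB j ≤ (cnt (Bset A w) 0 (eB j) : ℝ) := by
  induction j with
  | zero => simp [eB, cnt]
  | succ j ih =>
    have hsplit : cnt (Bset A w) 0 (eB (j + 1))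
        = cnt (Bset A w) 0 (eB j) + cnt (Bset A w) (eB j) (eB (j + 1)) :=
      cnt_add _ (Nat.zero_le _) (le_of_lt (eB_mono (Nat.lt_succ_self j)))
    have hblock : ρ * 2 ^ (j + 1) ≤ (cnt (Bset A w) (eB j) (eB (j + 1)) : ℝ) := by
      have h1 := hw (j + 1) (by omega)
      have h2 := block_count A w (j + 1) (by omega)
      simp only [Nat.add_sub_cancel] at h2
      calc ρ * 2 ^ (j + 1) ≤ (cnt A (w (j+1)) (w (j+1) + 2 ^ (j+1)) : ℝ) := h1
        _ ≤ _ := by exact_mod_cast h2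
    have heq : (eB (j + 1) : ℝ) = eB j + 2 ^ (j + 1) := by
      rw [eB_succ]; push_cast; ring
    rw [hsplit, heq]
    push_cast
    nlinarith

/-- locate n in a block -/
lemma exists_block (n : ℕ) (hn : 1 ≤ n) : ∃ j, eB j < n ∧ n ≤ eB (j + 1) := by
  have hex : ∃ m, n ≤ eB m := by
    refine ⟨n, ?_⟩
    have := Nat.lt_two_pow_self (n := n)
    unfold eB
    have h2 : 2 ^ n < 2 ^ (n + 1) := Nat.pow_lt_pow_right one_lt_two (by omega)
    omega
  classical
  set j0 := Nat.find hex with hj0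
  have hj0spec : n ≤ eB j0 := Nat.find_spec hex
  have hj0pos : 1 ≤ j0 := by
    rcases Nat.eq_zero_or_pos j0 with h0 | h1
    · exfalso; rw [h0] at hj0spec; simp [eB] at hj0spec; omega
    · exact h1
  refine ⟨j0 - 1, ?_, ?_⟩
  · by_contra hcon
    push_neg at hcon
    exact absurd hcon (Nat.find_min hex (by omega))
  · have : j0 - 1 + 1 = j0 := by omega
    rw [this]; exact hj0spec

/-- lower density of the pasted set is positive -/
lemma lowerDensity_Bset (A : Set ℕ) (w : ℕ → ℕ) (ρ : ℝ) (hρ : 0 < ρ)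
    (hw : ∀ i, 1 ≤ i → ρ * 2 ^ i ≤ (cnt A (w i) (w i + 2 ^ i) : ℝ)) :
    0 < lowerDensity (Bset A w) := by
  have key : ∀ n : ℕ, 4 ≤ n → ρ / 4 ≤ ((Bset A w ∩ Set.Icc 1 n).ncard : ℝ) / n := by
    intro n hn
    obtain ⟨j, hj1, hj2⟩ := exists_block n (by omega)
    have hpref := prefix_count A w ρ (le_of_lt hρ) hw j
    have hmono : cnt (Bset A w) 0 (eB j) ≤ cnt (Bset A w) 0 n := by
      unfold cnt
      exact Set.ncard_le_ncard (Set.inter_subset_inter_right _ (Set.Ioc_subset_Ioc_right (le_of_lt hj1))) (finite_inter _ _ _)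
    have hEq : (Bset A w ∩ Set.Icc 1 n).ncard = cnt (Bset A w) 0 n := by
      rw [Icc_one_eq_Ioc]; rfl
    rw [hEq]
    -- n ≤ eB (j+1) = 2 eB j + 2  so  eB j ≥ (n-2)/2 ≥ n/4 for n ≥ 4
    have hub : n ≤ 2 * eB j + 2 := by
      have := eB_succ j
      have h2 : 2 ^ (j + 1) = eB j + 2 := by unfold eB; have : 2 ≤ 2^(j+1) := Nat.one_lt_two_pow_iff.2 (by omega); omega
      omega
    have hebR : (n : ℝ) / 4 ≤ (eB j : ℝ) := by
      have : (n:ℝ) ≤ 2 * (eB j : ℝ) + 2 := by exact_mod_cast hub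
      have hn4 : (4:ℝ) ≤ n := by exact_mod_cast hn
      linarith
    have hnpos : (0:ℝ) < n := by positivity
    rw [le_div_iff₀ hnpos]
    calc ρ / 4 * n = ρ * (n / 4) := by ring
      _ ≤ ρ * eB j := by
          apply mul_le_mul_of_nonneg_left hebR (le_of_lt hρ)
      _ ≤ (cnt (Bset A w) 0 (eB j) : ℝ) := hpref
      _ ≤ (cnt (Bset A w) 0 n : ℝ) := by exact_mod_cast hmono
  have hquarter : 0 < ρ / 4 := by linarith
  have hbd : Filter.IsBoundedUnder (· ≤ ·) Filter.atTop
      (fun n : ℕ => ((Bset A w ∩ Set.Icc 1 n).ncard : ℝ) / n) := by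
    apply Filter.isBoundedUnder_of
    refine ⟨1, fun n => ?_⟩
    show ((Bset A w ∩ Set.Icc 1 n).ncard : ℝ) / n ≤ 1
    rcases Nat.eq_zero_or_pos n with h0 | h1
    · simp [h0]
    · rw [div_le_one (by exact_mod_cast h1 : (0:ℝ) < n)]
      have h := Set.ncard_le_ncard (Set.inter_subset_right :
          Bset A w ∩ Set.Icc 1 n ⊆ Set.Icc 1 n) (Set.finite_Icc 1 n)
      have h2 : (Set.Icc 1 n).ncard = n := by
        rw [← Finset.coe_Icc, Set.ncard_coe_finset, Nat.card_Icc]; omega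
      exact_mod_cast h2 ▸ h
  have hlim : ρ / 4 ≤ lowerDensity (Bset A w) :=
    Filter.le_liminf_of_le hbd.isCoboundedUnder_ge (Filter.eventually_atTop.2 ⟨4, key⟩)
  linarith

end Stmt15Aux

open Stmt15Aux in
theorem stmt15
    (h : ∀ A : Set ℕ, 0 < lowerDensity A → ∀ k : ℕ, HasAP A k) :
    ∀ A : Set ℕ, 0 < upperDensity A → ∀ k : ℕ, HasAP A k := by
  intro A hc k
  rcases Nat.eq_zero_or_pos k with hk0 | hk
  · exact ⟨0, 1, le_refl 1, fun t ht => by omega⟩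
  set c := upperDensity A with hcdef
  set ρ := c / 3 with hρdef
  have hρ : 0 < ρ := by positivity
  -- choose dense windows
  have hwex : ∀ i : ℕ, ∃ s : ℕ, ρ * 2 ^ i ≤ (cnt A s (s + 2 ^ i) : ℝ) := by
    intro i
    have := exists_dense_window A hc (2 ^ i) (Nat.one_le_two_pow)
    simpa [hρdef] using this
  choose w hw using hwex
  have hwp : ∀ i, 1 ≤ i → ρ * 2 ^ i ≤ (cnt A (w i) (w i + 2 ^ i) : ℝ) := fun i _ => hw i
  -- the pasted set has positive lower density, so it has long APs
  have hB := h (Bset A w) (lowerDensity_Bset A w ρ hρ hwp) (16 * k)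
  obtain ⟨a, d, hd, hAP⟩ := hB
  -- last term and its block
  set x := a + (16 * k - 1) * d with hxdef
  have hxB : x ∈ Bset A w := hAP (16 * k - 1) (by omega)
  obtain ⟨j, hj1, ⟨hx1, hx2⟩, -⟩ := hxB
  have haB : a ∈ Bset A w := by
    have := hAP 0 (by omega); simpa using this
  have ha1 : 1 ≤ a := by
    obtain ⟨i, hi1, ⟨hiu1, -⟩, -⟩ := haB
    omega
  -- j ≥ 4
  have hj4 : 4 ≤ j := by
    by_contra hcon
    push_neg at hcon
    have hxge : 16 ≤ x := by
      have h1 : 15 ≤ (16 * k - 1) * d := by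
        calc 15 = 15 * 1 := by ring
        _ ≤ (16 * k - 1) * d := Nat.mul_le_mul (by omega) hd
      omega
    have : eB j ≤ eB 3 := eB_mono.le_iff_le.2 (by omega)
    have : eB 3 = 14 := by norm_num [eB]
    omega
  -- abbreviate P = 2^(j-2)
  set P := 2 ^ (j - 2) with hPdef
  have hP4 : 4 ≤ P := by
    calc 4 = 2 ^ 2 := by norm_num
    _ ≤ 2 ^ (j - 2) := Nat.pow_le_pow_right (by omega) (by omega)
  have heJ : eB j = 8 * P - 2 := by
    unfold eB
    have h1 : 2 ^ (j + 1) = 2 ^ 3 * 2 ^ (j - 2) := by rw [← pow_add]; congr 1; omega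
    rw [h1, ← hPdef]; norm_num
  have heJ1 : eB (j - 1) = 4 * P - 2 := by
    unfold eB
    have h1 : 2 ^ (j - 1 + 1) = 2 ^ 2 * 2 ^ (j - 2) := by rw [← pow_add]; congr 1; omega
    rw [h1, ← hPdef]; norm_num
  have heJ2 : eB (j - 2) = 2 * P - 2 := by
    unfold eB
    have h1 : 2 ^ (j - 2 + 1) = 2 ^ 1 * 2 ^ (j - 2) := by rw [← pow_add]; congr 1; omega
    rw [h1, ← hPdef]; norm_num
  -- span bound : (2k-1) d < P
  have hspan : (2 * k - 1) * d < P := by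
    have hK : 8 * (2 * k - 1) ≤ 16 * k - 1 := by omega
    have h2 : 8 * ((2 * k - 1) * d) ≤ (16 * k - 1) * d := by
      rw [← Nat.mul_assoc]
      exact Nat.mul_le_mul_right d hK
    have h1 : (16 * k - 1) * d ≤ 8 * P - 3 := by omega
    omega
  -- case split on the middle term
  by_cases hcase : eB (j - 1) < a + (15 * k) * d
  · -- last k terms in block j
    refine ⟨w j + (a + (15 * k) * d - eB (j - 1)), d, hd, ?_⟩
    intro s hs
    set u := a + (15 * k + s) * d with hudef
    have hu1 : eB (j - 1) < u := by
      have : a + 15 * k * d ≤ u := by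
        rw [hudef]
        have := Nat.mul_le_mul_right d (show 15 * k ≤ 15 * k + s by omega)
        omega
      omega
    have hu2 : u ≤ eB j := by
      have : u ≤ x := by
        rw [hudef, hxdef]
        have := Nat.mul_le_mul_right d (show 15 * k + s ≤ 16 * k - 1 by omega)
        omega
      omega
    have huB : u ∈ Bset A w := hAP (15 * k + s) (by omega)
    have hmem := memA_of_block A w hj1 huB hu1 hu2
    have harith : w j + (u - eB (j - 1)) =
        w j + (a + 15 * k * d - eB (j - 1)) + s * d := by
      have : u = a + 15 * k * d + s * d := by rw [hudef]; ring
      omega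
    rw [harith] at hmem
    exact hmem
  · -- terms 14k .. 15k-1 in block j-1
    push_neg at hcase
    have hj11 : 1 ≤ j - 1 := by omega
    have hj2 : eB (j - 1 - 1) = 2 * P - 2 := by
      have hq : j - 1 - 1 = j - 2 := by omega
      rw [hq]; exact heJ2
    have hbase : eB (j - 1 - 1) < a + 14 * k * d := by
      have h1 : x ≤ a + 14 * k * d + (2 * k - 1) * d := by
        rw [hxdef]
        have h2 : (16 * k - 1) * d ≤ (14 * k + (2 * k - 1)) * d :=
          Nat.mul_le_mul_right d (by omega)
        rw [Nat.add_mul] at h2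
        have h3 : 14 * k * d = (14 * k) * d := by ring
        omega
      omega
    refine ⟨w (j - 1) + (a + 14 * k * d - eB (j - 1 - 1)), d, hd, ?_⟩
    intro s hs
    set u := a + (14 * k + s) * d with hudef
    have hule : u ≤ a + (15 * k - 1) * d := by
      rw [hudef]
      have := Nat.mul_le_mul_right d (show 14 * k + s ≤ 15 * k - 1 by omega)
      omega
    have hu2 : u ≤ eB (j - 1) := by
      have h1 : a + (15 * k - 1) * d ≤ a + 15 * k * d := by
        have := Nat.mul_le_mul_right d (show 15 * k - 1 ≤ 15 * k by omega)
        omega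
      omega
    have hu1 : eB (j - 1 - 1) < u := by
      have hle : 14 * k * d ≤ (14 * k + s) * d := by
        have := Nat.mul_le_mul_right d (show 14 * k ≤ 14 * k + s by omega)
        have h3 : 14 * k * d = (14 * k) * d := by ring
        omega
      omega
    have huB : u ∈ Bset A w := hAP (14 * k + s) (by omega)
    have hmem := memA_of_block A w hj11 huB hu1 hu2
    have harith : w (j - 1) + (u - eB (j - 1 - 1)) =
        w (j - 1) + (a + 14 * k * d - eB (j - 1 - 1)) + s * d := by
      have h4 : u = a + 14 * k * d + s * d := by rw [hudef]; ring
      omega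
    rw [harith] at hmem
    exact hmem
end
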